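/- Let G' be a graph, V ⊂ V(G'), G = G'[V], H₁,…,H_k the connected components of G'[V'∖V], and S a power dominating set of G. For each i, let N_i = V(H_i) ∩ N_{G'}[V ∖ N_G[S]]. Then γ_P(G';S) ≤ Σᵢ γ_P(H_i;N_i) + |S|. -/

import Mathlib

namespace RPD

variable {V : Type*}

/-- The closed neighborhood of a set of vertices. -/
def closedNbhd (G : SimpleGraph V) (S : Set V) : Set V :=
  S ∪ {v | ∃ u ∈ S, G.Adj u v}

/-- The zero forcing closure: `ZFC G B v` means `v` eventually gets colored when
starting from the blue set `B` and repeatedly applying the color change rule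
(a colored vertex with exactly one uncolored neighbor colors that neighbor). -/
inductive ZFC (G : SimpleGraph V) (B : Set V) : V → Prop
  | init (v : V) (hv : v ∈ B) : ZFC G B v
  | force (u w : V) (hu : ZFC G B u) (hadj : G.Adj u w)
      (hothers : ∀ x, G.Adj u x → x ≠ w → ZFC G B x) : ZFC G B w

/-- `B` is a zero forcing set of `G`. -/
def IsZFS (G : SimpleGraph V) (B : Set V) : Prop := ∀ v, ZFC G B v

/-- `S` is a power dominating set of `G`: its closed neighborhood is a zero forcing set. -/
def IsPDS (G : SimpleGraph V) (S : Set V) : Prop := IsZFS G (closedNbhd G S)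

/-- The restricted zero forcing number `Z(G;X)`; `Z(G) = zNum G ∅`. -/
noncomputable def zNum (G : SimpleGraph V) (X : Set V) : ℕ :=
  sInf {n | ∃ B : Set V, X ⊆ B ∧ IsZFS G B ∧ B.ncard = n}

/-- The restricted power domination number `γ_P(G;X)`; `γ_P(G) = pdNum G ∅`. -/
noncomputable def pdNum (G : SimpleGraph V) (X : Set V) : ℕ :=
  sInf {n | ∃ S : Set V, X ⊆ S ∧ IsPDS G S ∧ S.ncard = n}

/-- A leaf is a vertex of degree one, i.e. whose neighbor set is a singleton. -/
def IsLeaf (G : SimpleGraph V) (l : V) : Prop := ∃ u, G.neighborSet l = {u}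

end RPD

open RPD

section Aux
variable {V : Type*}

lemma exists_min_pds (G : SimpleGraph V) (X : Set V) :
    ∃ T, X ⊆ T ∧ IsPDS G T ∧ T.ncard = pdNum G X := by
  have hne : {n | ∃ S : Set V, X ⊆ S ∧ IsPDS G S ∧ S.ncard = n}.Nonempty :=
    ⟨Set.univ.ncard, Set.univ, Set.subset_univ _,
      fun v => ZFC.init v (Set.mem_union_left _ (Set.mem_univ v)), rfl⟩
  exact Nat.sInf_mem hne

lemma ZFC_transfer {W : Type*} (Gs : SimpleGraph W) (G : SimpleGraph V) (f : W → V)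
    (hadjf : ∀ a b, Gs.Adj a b ↔ G.Adj (f a) (f b))
    (B : Set V) (BB : Set W)
    (hinit : ∀ v ∈ BB, ZFC G B (f v))
    (hout : ∀ u : W, ∀ x, G.Adj (f u) x → (∀ y : W, f y ≠ x) → ZFC G B x)
    {v : W} (hv : ZFC Gs BB v) : ZFC G B (f v) := by
  induction hv with
  | init v hv => exact hinit v hv
  | force u w hu ha ho ihu ih =>
    refine ZFC.force (f u) (f w) ihu ((hadjf u w).1 ha) ?_
    intro x hx hne
    by_cases hmem : ∃ y, f y = x
    · obtain ⟨y, rfl⟩ := hmem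
      exact ih y ((hadjf u y).2 hx) (fun h => hne (congrArg f h))
    · exact hout u x hx (fun y hy => hmem ⟨y, hy⟩)

lemma ncard_iUnion_le {ι : Type*} [Fintype ι] (f : ι → Set V) :
    (⋃ i, f i).ncard ≤ ∑ i, (f i).ncard := by
  classical
  have : ∀ s : Finset ι, (⋃ i ∈ s, f i).ncard ≤ ∑ i ∈ s, (f i).ncard := by
    intro s
    induction s using Finset.induction with
    | empty => simp
    | insert a s hnot ih =>
      rw [Finset.set_biUnion_insert, Finset.sum_insert hnot]
      exact le_trans (Set.ncard_union_le _ _) (by omega)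
  simpa using this Finset.univ

end Aux

theorem stmt11 {V' : Type*} [Finite V'] (G' : SimpleGraph V') (Vs : Set V')
    (hproper : Vs ⊂ Set.univ) (S : Set V') (hSV : S ⊆ Vs)
    (hS : IsPDS (G'.induce Vs) (Subtype.val ⁻¹' S)) :
    pdNum G' S ≤
      (∑ᶠ c : (G'.induce Vsᶜ).ConnectedComponent,
        pdNum ((G'.induce Vsᶜ).induce c.supp)
          ((fun x => ((x : ↥(Vsᶜ)) : V')) ⁻¹'
            closedNbhd G' (Vs \ closedNbhd G' S))) + S.ncard := by
  classical
  set H : SimpleGraph ↥(Vsᶜ) := G'.induce Vsᶜ with hHdef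
  set U : Set V' := Vs \ closedNbhd G' S with hUdef
  have hex : ∀ c : H.ConnectedComponent,
      ∃ T : Set ↥c.supp,
        ((fun x : ↥c.supp => ((x : ↥(Vsᶜ)) : V')) ⁻¹' closedNbhd G' U) ⊆ T ∧
        IsPDS (H.induce c.supp) T ∧
        T.ncard = pdNum (H.induce c.supp)
          ((fun x : ↥c.supp => ((x : ↥(Vsᶜ)) : V')) ⁻¹' closedNbhd G' U) :=
    fun c => exists_min_pds _ _
  choose T hT1 hT2 hT3 using hex
  set Tset : Set V' :=
    ⋃ c : H.ConnectedComponent, (fun x : ↥c.supp => ((x : ↥(Vsᶜ)) : V')) '' T c with hTsetdef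
  set D : Set V' := S ∪ Tset with hDdef
  set B : Set V' := closedNbhd G' D with hBdef
  have hDB : D ⊆ B := Set.subset_union_left
  have hSB : closedNbhd G' S ⊆ B := by
    rintro x (hx | ⟨u, hu, ha⟩)
    · exact hDB (Or.inl hx)
    · exact Or.inr ⟨u, Or.inl hu, ha⟩
  have hTmem : ∀ (c : H.ConnectedComponent) (y : ↥c.supp), y ∈ T c →
      ((y : ↥(Vsᶜ)) : V') ∈ Tset :=
    fun c y hy => Set.mem_iUnion.2 ⟨c, ⟨y, hy, rfl⟩⟩
  -- every vertex of Vs adjacent (in G') to a vertex outside Vs is initially blue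
  have f2 : ∀ u x : V', u ∉ Vs → x ∈ Vs → G'.Adj u x → x ∈ B := by
    intro u x hu hx hadj
    by_cases hxd : x ∈ closedNbhd G' S
    · exact hSB hxd
    · have huU : u ∈ closedNbhd G' U := Or.inr ⟨x, ⟨hx, hxd⟩, hadj.symm⟩
      have hu' : u ∈ Vsᶜ := hu
      set c := H.connectedComponentMk ⟨u, hu'⟩ with hc
      have hmem : (⟨u, hu'⟩ : ↥(Vsᶜ)) ∈ c.supp :=
        (SimpleGraph.ConnectedComponent.mem_supp_iff _ _).2 rfl
      have hT : (⟨⟨u, hu'⟩, hmem⟩ : ↥c.supp) ∈ T c := hT1 c huU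
      exact Or.inr ⟨u, Or.inr (hTmem c _ hT), hadj⟩
  -- Step 1: every vertex outside Vs eventually gets colored
  have step1 : ∀ x : V', x ∉ Vs → ZFC G' B x := by
    intro x hx
    have hx' : x ∈ Vsᶜ := hx
    set c := H.connectedComponentMk ⟨x, hx'⟩ with hc
    have hmem : (⟨x, hx'⟩ : ↥(Vsᶜ)) ∈ c.supp :=
      (SimpleGraph.ConnectedComponent.mem_supp_iff _ _).2 rfl
    have hv := hT2 c ⟨⟨x, hx'⟩, hmem⟩
    exact ZFC_transfer (H.induce c.supp) G' (fun y : ↥c.supp => ((y : ↥(Vsᶜ)) : V'))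
      (fun a b => Iff.rfl) B (closedNbhd (H.induce c.supp) (T c))
      (by
        rintro v (hv | ⟨u, hu, ha⟩)
        · exact ZFC.init _ (hDB (Or.inr (hTmem c v hv)))
        · exact ZFC.init _ (Or.inr ⟨_, Or.inr (hTmem c u hu), ha⟩))
      (by
        intro u y hadj hno
        by_cases hy : y ∈ Vs
        · exact ZFC.init _ (f2 _ y (u : ↥(Vsᶜ)).2 hy hadj)
        · have hy' : y ∈ Vsᶜ := hy
          have hadjH : H.Adj (u : ↥(Vsᶜ)) ⟨y, hy'⟩ := hadj
          have hsupp : (⟨y, hy'⟩ : ↥(Vsᶜ)) ∈ c.supp := by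
            rw [SimpleGraph.ConnectedComponent.mem_supp_iff]
            rw [SimpleGraph.ConnectedComponent.sound hadjH.symm.reachable]
            exact (SimpleGraph.ConnectedComponent.mem_supp_iff _ _).1 u.2
          exact absurd rfl (hno ⟨⟨y, hy'⟩, hsupp⟩))
      hv
  -- Step 2: every vertex of Vs eventually gets colored
  have step2 : ∀ x : V', x ∈ Vs → ZFC G' B x := by
    intro x hx
    exact ZFC_transfer (G'.induce Vs) G' (fun y : ↥Vs => (y : V'))
      (fun a b => Iff.rfl) B (closedNbhd (G'.induce Vs) (Subtype.val ⁻¹' S))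
      (by
        rintro v (hv | ⟨u, hu, ha⟩)
        · exact ZFC.init _ (hDB (Or.inl hv))
        · exact ZFC.init _ (hSB (Or.inr ⟨u, hu, ha⟩)))
      (by
        intro u y hadj hno
        refine step1 y fun hy => ?_
        exact absurd rfl (hno ⟨y, hy⟩))
      (hS ⟨x, hx⟩)
  have hPDS : IsPDS G' D := by
    intro v
    by_cases hv : v ∈ Vs
    · exact step2 v hv
    · exact step1 v hv
  have h1 : pdNum G' S ≤ D.ncard :=
    Nat.sInf_le ⟨D, Set.subset_union_left, hPDS, rfl⟩
  haveI : Fintype H.ConnectedComponent := Fintype.ofFinite _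
  have hinj : ∀ c : H.ConnectedComponent,
      Function.Injective (fun x : ↥c.supp => ((x : ↥(Vsᶜ)) : V')) :=
    fun c a b h => Subtype.val_injective (Subtype.val_injective h)
  have h2 : Tset.ncard ≤ ∑ c : H.ConnectedComponent,
      pdNum (H.induce c.supp)
        ((fun x : ↥c.supp => ((x : ↥(Vsᶜ)) : V')) ⁻¹' closedNbhd G' U) := by
    refine le_trans (ncard_iUnion_le _) (le_of_eq (Finset.sum_congr rfl fun c _ => ?_))
    rw [Set.ncard_image_of_injective _ (hinj c), hT3 c]
  have h3 : D.ncard ≤ S.ncard + Tset.ncard := Set.ncard_union_le _ _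
  rw [finsum_eq_sum_of_fintype]
  omega
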